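/- The topological closure of a discrete exponential family E_A equals the finite union ⋃_F E_{F,A} over all facial sets F of the convex support polytope P_A, where E_{F,A} = { p_{F,θ} : θ ∈ ℝ^J } and p_{F,θ}(i) = exp(⟨θ,f_i⟩ − k_F(θ)) for i ∈ F, and 0 otherwise. -/

import Mathlib

set_option linter.unusedSectionVars false
set_option linter.unusedVariables false
set_option maxHeartbeats 1000000

open Finset Filter Topology

/-- The discrete exponential family `E_A` as a set of distributions on `I`. -/
noncomputable def expFam {I J : Type} [Fintype I] [Fintype J] (A : J → I → ℝ) :
    Set (I → ℝ) :=
  {q | ∃ θ : J → ℝ, q = fun i =>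
    Real.exp (∑ j, θ j * A j i - Real.log (∑ i', Real.exp (∑ j, θ j * A j i')))}

/-- `F` is a facial set of `P_A = conv{f_i}`: the set of indices of vertices lying on some
face of `P_A`, i.e. the set of maximizers of a linear functional `g` over the columns. -/
def FacialF {I J : Type} [Fintype I] [Fintype J] (A : J → I → ℝ) (F : Finset I) : Prop :=
  ∃ g : J → ℝ, ∀ i, i ∈ F ↔ ∀ i', ∑ j, g j * A j i' ≤ ∑ j, g j * A j i

/-- The truncation `p_{F,θ}` of the family to a facial set `F`. -/
noncomputable def ptrunc {I J : Type} [Fintype I] [Fintype J] [DecidableEq I]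
    (A : J → I → ℝ) (F : Finset I) (θ : J → ℝ) (i : I) : ℝ :=
  if i ∈ F then
    Real.exp (∑ j, θ j * A j i - Real.log (∑ i' ∈ F, Real.exp (∑ j, θ j * A j i')))
  else 0

namespace ExpFamAux

variable {I J : Type} [Fintype I] [Fintype J] [DecidableEq I] [Nonempty I] (A : J → I → ℝ)

/-- The inner product `⟨θ, f_i⟩` of a parameter with the `i`-th column of `A`. -/
noncomputable def ip (θ : J → ℝ) (i : I) : ℝ := ∑ j, θ j * A j i

lemma Zpos (θ : J → ℝ) : 0 < ∑ i', Real.exp (ip A θ i') :=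
  Finset.sum_pos (fun i _ => Real.exp_pos _) Finset.univ_nonempty

lemma pdist_eq (θ : J → ℝ) (i : I) :
    Real.exp (ip A θ i - Real.log (∑ i', Real.exp (ip A θ i'))) =
      Real.exp (ip A θ i) / ∑ i', Real.exp (ip A θ i') := by
  rw [Real.exp_sub, Real.exp_log (Zpos A θ)]

lemma ip_add_smul (θ g : J → ℝ) (c : ℝ) (i : I) :
    ip A (θ + c • g) i = ip A θ i + c * ip A g i := by
  simp [ip, add_mul, Finset.sum_add_distrib, Finset.mul_sum, mul_assoc]

lemma tendsto_exp_zero (a d : ℝ) (hd : d < 0) :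
    Tendsto (fun n : ℕ => Real.exp (a + n * d)) atTop (𝓝 0) := by
  have h : Tendsto (fun n : ℕ => Real.exp a * Real.exp d ^ n) atTop (𝓝 (Real.exp a * 0)) :=
    (tendsto_pow_atTop_nhds_zero_of_lt_one (Real.exp_pos d).le
      (Real.exp_lt_one_iff.mpr hd)).const_mul _
  rw [mul_zero] at h
  refine h.congr fun n => ?_
  rw [← Real.exp_nat_mul, ← Real.exp_add, mul_comm (n : ℝ) d, mul_comm]

/-- Part A: along the ray `θ + n • g`, the exponential family converges to the truncation. -/
lemma tendstoA (F : Finset I) (g : J → ℝ)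
    (hFg : ∀ i, i ∈ F ↔ ∀ i', ip A g i' ≤ ip A g i) (θ : J → ℝ) :
    Tendsto (fun n : ℕ => fun i =>
        Real.exp (ip A (θ + (n : ℝ) • g) i) / ∑ i', Real.exp (ip A (θ + (n : ℝ) • g) i'))
      atTop (𝓝 (ptrunc A F θ)) := by
  obtain ⟨i0, -, hi0⟩ := Finset.exists_max_image Finset.univ (ip A g)
    ⟨Classical.arbitrary I, Finset.mem_univ _⟩
  set m : ℝ := ip A g i0 with hm
  have hF0 : i0 ∈ F := (hFg i0).mpr fun i' => hi0 i' (Finset.mem_univ _)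
  have hFm : ∀ i ∈ F, ip A g i = m :=
    fun i hi => le_antisymm (hi0 i (Finset.mem_univ _)) (((hFg i).mp hi) i0)
  have hNm : ∀ i ∉ F, ip A g i < m := by
    intro i hi
    rcases lt_or_eq_of_le (hi0 i (Finset.mem_univ _)) with h | h
    · exact h
    · exact absurd ((hFg i).mpr fun i' => h ▸ hi0 i' (Finset.mem_univ _)) hi
  have denpos : 0 < ∑ i' ∈ F, Real.exp (ip A θ i') :=
    Finset.sum_pos (fun _ _ => Real.exp_pos _) ⟨i0, hF0⟩
  have hptr : ptrunc A F θ = fun i => if i ∈ F then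
      Real.exp (ip A θ i) / ∑ i' ∈ F, Real.exp (ip A θ i') else 0 := by
    funext i
    by_cases hi : i ∈ F
    · simp only [ptrunc, hi, if_true]
      show Real.exp (ip A θ i - Real.log (∑ i' ∈ F, Real.exp (ip A θ i'))) = _
      rw [Real.exp_sub, Real.exp_log denpos]
    · simp [ptrunc, hi]
  rw [hptr, tendsto_pi_nhds]
  intro i
  have key : ∀ n : ℕ, ∀ i, Real.exp (ip A (θ + (n : ℝ) • g) i)
      = Real.exp (ip A θ i + n * (ip A g i - m)) * Real.exp (n * m) := by
    intro n i
    rw [← Real.exp_add, ip_add_smul]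
    ring_nf
  have num : Tendsto (fun n : ℕ => Real.exp (ip A θ i + n * (ip A g i - m))) atTop
      (𝓝 (if i ∈ F then Real.exp (ip A θ i) else 0)) := by
    by_cases hi : i ∈ F
    · simp only [hi, if_true, hFm i hi, sub_self, mul_zero, add_zero]
      exact tendsto_const_nhds
    · simp only [hi, if_false]
      exact tendsto_exp_zero _ _ (sub_neg.mpr (hNm i hi))
  have den : Tendsto (fun n : ℕ => ∑ i', Real.exp (ip A θ i' + n * (ip A g i' - m))) atTop
      (𝓝 (∑ i' ∈ F, Real.exp (ip A θ i'))) := by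
    have h : Tendsto (fun n : ℕ => ∑ i', Real.exp (ip A θ i' + n * (ip A g i' - m))) atTop
        (𝓝 (∑ i', if i' ∈ F then Real.exp (ip A θ i') else 0)) := by
      apply tendsto_finset_sum
      intro i' _
      by_cases hi' : i' ∈ F
      · simp only [hi', if_true, hFm i' hi', sub_self, mul_zero, add_zero]
        exact tendsto_const_nhds
      · simp only [hi', if_false]
        exact tendsto_exp_zero _ _ (sub_neg.mpr (hNm i' hi'))
    rwa [Finset.sum_ite_mem, Finset.univ_inter] at h
  have main := num.div den denpos.ne'
  have hval : (if i ∈ F then Real.exp (ip A θ i) else 0) / ∑ i' ∈ F, Real.exp (ip A θ i')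
      = (if i ∈ F then Real.exp (ip A θ i) / ∑ i' ∈ F, Real.exp (ip A θ i') else 0) := by
    by_cases hi : i ∈ F <;> simp [hi]
  rw [hval] at main
  refine main.congr fun n => ?_
  have hkey : ∀ i', Real.exp (ip A (θ + (n : ℝ) • g) i')
      = Real.exp (ip A θ i' + n * (ip A g i' - m)) * Real.exp (n * m) := key n
  simp only [hkey, ← Finset.sum_mul]
  rw [mul_div_mul_right _ _ (Real.exp_ne_zero _)]
  rfl

/-- Every truncation to a facial set lies in the closure of the exponential family. -/
lemma ptrunc_mem_closure (F : Finset I) (hF : FacialF A F) (θ : J → ℝ) :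
    ptrunc A F θ ∈ closure (expFam A) := by
  obtain ⟨g, hFg⟩ := hF
  refine mem_closure_of_tendsto (tendstoA A F g hFg θ) (Eventually.of_forall fun n => ?_)
  exact ⟨θ + (n : ℝ) • g, funext fun i => (pdist_eq A _ i).symm⟩

/-- The relative linear map `θ ↦ (⟨θ, f_i - f_{i0}⟩)_i`. -/
noncomputable def Tmap (i0 : I) : (J → ℝ) →ₗ[ℝ] (I → ℝ) where
  toFun θ := fun i => ip A θ i - ip A θ i0
  map_add' θ η := by
    funext i
    simp [ip, add_mul, Finset.sum_add_distrib]
    ring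
  map_smul' c θ := by
    funext i
    simp [ip, Finset.mul_sum, mul_assoc, mul_sub]

/-- The key linear-algebraic extraction: if the relative coordinates converge on `S` and
diverge to `-∞` off `S`, then the limit values on `S` are attained by some parameter, and
there is a direction `g` vanishing on `S` and negative off `S`. -/
lemma key_lin (i0 : I) (S : Finset I) (θn : ℕ → J → ℝ) (v : I → ℝ)
    (hS : ∀ i ∈ S, Tendsto (fun n => Tmap A i0 (θn n) i) atTop (𝓝 (v i)))
    (hNS : ∀ i ∉ S, Tendsto (fun n => Tmap A i0 (θn n) i) atTop atBot) :
    (∃ θ : J → ℝ, ∀ i ∈ S, Tmap A i0 θ i = v i) ∧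
    (∃ g : J → ℝ, (∀ i ∈ S, Tmap A i0 g i = 0) ∧ (∀ i ∉ S, Tmap A i0 g i < 0)) := by
  classical
  set π : (I → ℝ) →ₗ[ℝ] ({x // x ∈ S} → ℝ) :=
    LinearMap.funLeft ℝ ℝ (fun i : {x // x ∈ S} => (i : I)) with hπ
  set T' : (J → ℝ) →ₗ[ℝ] ({x // x ∈ S} → ℝ) := π ∘ₗ Tmap A i0 with hT'
  have hclosed : IsClosed (LinearMap.range T' : Set ({x // x ∈ S} → ℝ)) :=
    Submodule.closed_of_finiteDimensional _
  have htend : Tendsto (fun n => T' (θn n)) atTop (𝓝 (fun i : {x // x ∈ S} => v i)) := by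
    rw [tendsto_pi_nhds]
    exact fun i => hS i i.2
  have hv : (fun i : {x // x ∈ S} => v i) ∈ LinearMap.range T' :=
    hclosed.mem_of_tendsto htend (Eventually.of_forall fun n => ⟨θn n, rfl⟩)
  obtain ⟨θ, hθ⟩ := hv
  have hθ' : ∀ i ∈ S, Tmap A i0 θ i = v i := fun i hi => congrFun hθ ⟨i, hi⟩
  refine ⟨⟨θ, hθ'⟩, ?_⟩
  set R : Submodule ℝ (I → ℝ) := LinearMap.range (Tmap A i0) with hR
  set ρ : R →ₗ[ℝ] ({x // x ∈ S} → ℝ) := π ∘ₗ R.subtype with hρ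
  obtain ⟨σ0, hσ0⟩ := ρ.rangeRestrict.exists_rightInverse_of_surjective
    (LinearMap.range_rangeRestrict ρ)
  obtain ⟨N', hN'⟩ := Submodule.exists_isCompl (LinearMap.range ρ)
  set pr := (LinearMap.range ρ).linearProjOfIsCompl N' hN' with hpr
  set σ : ({x // x ∈ S} → ℝ) →ₗ[ℝ] R := σ0 ∘ₗ pr with hσ
  have hsec : ∀ z : R, ρ (σ (ρ z)) = ρ z := by
    intro z
    have h1 : pr (ρ z) = ρ.rangeRestrict z :=
      Submodule.linearProjOfIsCompl_apply_left hN' (ρ.rangeRestrict z)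
    have h2 : ρ.rangeRestrict (σ0 (ρ.rangeRestrict z)) = ρ.rangeRestrict z :=
      congrArg (fun f => f (ρ.rangeRestrict z)) hσ0
    calc ρ (σ (ρ z)) = ((ρ.rangeRestrict (σ0 (pr (ρ z)))) : {x // x ∈ S} → ℝ) := rfl
    _ = ρ z := by rw [h1, h2]; rfl
  set Zs : ℕ → R := fun n => ⟨Tmap A i0 (θn n) - Tmap A i0 θ,
    sub_mem (LinearMap.mem_range_self _ _) (LinearMap.mem_range_self _ _)⟩ with hZs
  have hρZ : Tendsto (fun n => ρ (Zs n)) atTop (𝓝 0) := by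
    rw [tendsto_pi_nhds]
    intro i
    have h1 : Tendsto (fun n => Tmap A i0 (θn n) i - Tmap A i0 θ i) atTop (𝓝 (v i - v i)) :=
      ((hS i i.2).sub_const _).congr fun n => by rw [hθ' i i.2]
    rw [sub_self] at h1
    exact h1
  have hσcont : Continuous σ := σ.continuous_of_finiteDimensional
  have hσZ : Tendsto (fun n => σ (ρ (Zs n))) atTop (𝓝 0) := by
    have h := (hσcont.tendsto 0).comp hρZ
    rwa [map_zero] at h
  have hval : ∀ i : I, Tendsto (fun n => ((σ (ρ (Zs n)) : I → ℝ)) i) atTop (𝓝 0) := by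
    intro i
    have hc : Continuous fun x : R => (x : I → ℝ) i :=
      (continuous_apply i).comp continuous_subtype_val
    have h := (hc.tendsto 0).comp hσZ
    simpa [Function.comp_def] using h
  set W : ℕ → R := fun n => Zs n - σ (ρ (Zs n)) with hW
  have hWS : ∀ n, ∀ i ∈ S, ((W n : I → ℝ)) i = 0 := by
    intro n i hi
    have h0 : ρ (W n) = 0 := by
      rw [hW]
      simp only [map_sub, hsec, sub_self]
    exact congrFun h0 ⟨i, hi⟩
  have hWneg : ∀ i ∉ S, Tendsto (fun n => ((W n : I → ℝ)) i) atTop atBot := by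
    intro i hi
    have h1 : Tendsto (fun n => Tmap A i0 (θn n) i - Tmap A i0 θ i) atTop atBot :=
      tendsto_atBot_add_const_right _ _ (hNS i hi)
    have h2 : Tendsto (fun n => (- ((σ (ρ (Zs n)) : I → ℝ)) i)
        + (Tmap A i0 (θn n) i - Tmap A i0 θ i)) atTop atBot :=
      Tendsto.add_atBot (by simpa using (hval i).neg) h1
    refine h2.congr fun n => ?_
    show _ = ((Zs n : I → ℝ) i) - ((σ (ρ (Zs n)) : I → ℝ)) i
    have hz : (Zs n : I → ℝ) i = Tmap A i0 (θn n) i - Tmap A i0 θ i := rfl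
    rw [hz]; ring
  have hevent : ∀ᶠ n in atTop, ∀ i ∈ Sᶜ, ((W n : I → ℝ)) i < 0 := by
    rw [eventually_all_finset]
    intro i hi
    exact (hWneg i (Finset.mem_compl.mp hi)).eventually (eventually_lt_atBot 0)
  obtain ⟨n0, hn0⟩ := hevent.exists
  obtain ⟨g, hg⟩ := (W n0).2
  refine ⟨g, fun i hi => ?_, fun i hi => ?_⟩
  · rw [hg]; exact hWS n0 i hi
  · rw [hg]; exact hn0 i (Finset.mem_compl.mpr hi)

end ExpFamAux

open ExpFamAux in
/-- The topological closure of the discrete exponential family `E_A` equals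
the union `⋃_F E_{F,A}` over all facial sets `F` of the convex support polytope `P_A`. -/
theorem closure_expFam_eq_union {I J : Type} [Fintype I] [Fintype J] [DecidableEq I]
    [Nonempty I] (A : J → I → ℝ) :
    closure (expFam A) =
      {q : I → ℝ | ∃ F : Finset I, FacialF A F ∧ ∃ θ : J → ℝ, q = ptrunc A F θ} := by
  classical
  ext q
  constructor
  · -- hard direction
    intro hq
    obtain ⟨u, humem, hutend⟩ := mem_closure_iff_seq_limit.mp hq
    choose θn hθn using humem
    have hpt : ∀ i, Tendsto (fun n =>
        Real.exp (ip A (θn n) i) / ∑ i', Real.exp (ip A (θn n) i')) atTop (𝓝 (q i)) := by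
      intro i
      have h := (tendsto_pi_nhds.mp hutend) i
      refine h.congr fun n => ?_
      rw [hθn n]
      exact pdist_eq A (θn n) i
    have hq0 : ∀ i, 0 ≤ q i :=
      fun i => ge_of_tendsto' (hpt i) fun n => (div_pos (Real.exp_pos _) (Zpos A _)).le
    have hsum : ∑ i, q i = 1 := by
      have h1 : Tendsto (fun n => ∑ i, Real.exp (ip A (θn n) i)
          / ∑ i', Real.exp (ip A (θn n) i')) atTop (𝓝 (∑ i, q i)) :=
        tendsto_finset_sum _ fun i _ => hpt i
      have h3 : Tendsto (fun _ : ℕ => (1 : ℝ)) atTop (𝓝 (∑ i, q i)) :=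
        h1.congr fun n => by rw [← Finset.sum_div, div_self (Zpos A (θn n)).ne']
      exact tendsto_nhds_unique h3 tendsto_const_nhds
    set S : Finset I := Finset.univ.filter (fun i => 0 < q i) with hSdef
    have hSmem : ∀ i, i ∈ S ↔ 0 < q i := by intro i; simp [hSdef]
    have hSne : S.Nonempty := by
      by_contra h
      rw [Finset.not_nonempty_iff_eq_empty] at h
      have hz : ∀ i, q i = 0 := by
        intro i
        have : i ∉ S := h ▸ Finset.notMem_empty i
        exact le_antisymm (not_lt.mp fun hc => this ((hSmem i).mpr hc)) (hq0 i)
      simp [hz] at hsum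
    obtain ⟨i0, hi0⟩ := hSne
    have hqi0 : 0 < q i0 := (hSmem i0).mp hi0
    have hratio : ∀ i, Tendsto (fun n => Real.exp (Tmap A i0 (θn n) i)) atTop
        (𝓝 (q i / q i0)) := by
      intro i
      have h := (hpt i).div (hpt i0) hqi0.ne'
      refine h.congr fun n => ?_
      have hT : Tmap A i0 (θn n) i = ip A (θn n) i - ip A (θn n) i0 := rfl
      rw [hT, Real.exp_sub]
      simp only [Pi.div_apply]
      field_simp
    have hS : ∀ i ∈ S, Tendsto (fun n => Tmap A i0 (θn n) i) atTop
        (𝓝 (Real.log (q i / q i0))) := by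
      intro i hi
      have hpos : 0 < q i / q i0 := div_pos ((hSmem i).mp hi) hqi0
      have h := ((Real.continuousAt_log hpos.ne').tendsto).comp (hratio i)
      exact h.congr fun n => Real.log_exp _
    have hNS : ∀ i ∉ S, Tendsto (fun n => Tmap A i0 (θn n) i) atTop atBot := by
      intro i hi
      have hzi : q i = 0 :=
        le_antisymm (not_lt.mp fun hc => hi ((hSmem i).mpr hc)) (hq0 i)
      have h0 : Tendsto (fun n => Real.exp (Tmap A i0 (θn n) i)) atTop (𝓝 0) := by
        have := hratio i
        rwa [hzi, zero_div] at this
      have h1 : Tendsto (fun n => Real.exp (Tmap A i0 (θn n) i)) atTop (𝓝[>] 0) :=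
        tendsto_nhdsWithin_of_tendsto_nhds_of_eventually_within _ h0
          (Eventually.of_forall fun n => Real.exp_pos _)
      have h2 := Real.tendsto_log_nhdsGT_zero.comp h1
      exact h2.congr fun n => Real.log_exp _
    obtain ⟨⟨θ, hθ⟩, ⟨g, hg0, hgneg⟩⟩ :=
      key_lin A i0 S θn (fun i => Real.log (q i / q i0)) hS hNS
    have hip0 : ∀ i ∈ S, ip A g i = ip A g i0 := by
      intro i hi
      have := hg0 i hi
      have hT : Tmap A i0 g i = ip A g i - ip A g i0 := rfl
      rw [hT] at this
      linarith
    have hipneg : ∀ i ∉ S, ip A g i < ip A g i0 := by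
      intro i hi
      have := hgneg i hi
      have hT : Tmap A i0 g i = ip A g i - ip A g i0 := rfl
      rw [hT] at this
      linarith
    refine ⟨S, ⟨g, fun i => ⟨fun hi i' => ?_, fun h => ?_⟩⟩, θ, ?_⟩
    · -- i ∈ S maximizes
      show ip A g i' ≤ ip A g i
      rw [hip0 i hi]
      by_cases hi' : i' ∈ S
      · rw [hip0 i' hi']
      · exact (hipneg i' hi').le
    · -- a maximizer is in S
      by_contra hi
      exact absurd (h i0) (not_le.mpr (hipneg i hi))
    · -- q = ptrunc A S θ
      have hsumS : ∑ i' ∈ S, q i' = 1 := by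
        rw [← hsum]
        refine Finset.sum_subset (Finset.subset_univ S) fun x _ hx => ?_
        exact le_antisymm (not_lt.mp fun hc => hx ((hSmem x).mpr hc)) (hq0 x)
      set K : ℝ := Real.exp (ip A θ i0) / q i0 with hK
      have hKpos : 0 < K := div_pos (Real.exp_pos _) hqi0
      have hexpθ : ∀ i' ∈ S, Real.exp (ip A θ i') = K * q i' := by
        intro i' hi'
        have h := hθ i' hi'
        have hT : Tmap A i0 θ i' = ip A θ i' - ip A θ i0 := rfl
        rw [hT] at h
        have heq : ip A θ i' = Real.log (q i' / q i0) + ip A θ i0 := by linarith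
        rw [heq, Real.exp_add, Real.exp_log (div_pos ((hSmem i').mp hi') hqi0)]
        rw [hK]
        field_simp
      have hZS : ∑ i' ∈ S, Real.exp (ip A θ i') = K := by
        rw [Finset.sum_congr rfl hexpθ, ← Finset.mul_sum, hsumS, mul_one]
      funext i
      by_cases hi : i ∈ S
      · have hpe : ptrunc A S θ i = Real.exp (ip A θ i) / ∑ i' ∈ S, Real.exp (ip A θ i') := by
          simp only [ptrunc, hi, if_true]
          show Real.exp (ip A θ i - Real.log (∑ i' ∈ S, Real.exp (ip A θ i'))) = _
          rw [Real.exp_sub, Real.exp_log (hZS ▸ hKpos)]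
        rw [hpe, hZS, hexpθ i hi, mul_comm, mul_div_assoc, div_self hKpos.ne', mul_one]
      · have hzi : q i = 0 :=
          le_antisymm (not_lt.mp fun hc => hi ((hSmem i).mpr hc)) (hq0 i)
        simp [ptrunc, hi, hzi]
  · rintro ⟨F, hF, θ, rfl⟩
    exact ptrunc_mem_closure A F hF θ
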